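/- For every fixed t ∈ ℝ, the function α ↦ X(t,α) is left-continuous and locally of bounded variation on ℝ; moreover, for every s ∈ ℝ with t ≥ s + τ_N and every j ∈ {1,…,N}, the matrix-valued Lebesgue–Stieltjes measures on [s, s+τ_j) satisfy d_α X(t,α) = Σ_{j'=1}^N D_{j'}(t) · d_α X(t−τ_{j'}, α) as measures on [s, s+τ_j). -/

import Mathlib

open MeasureTheory Set
open scoped ENNReal NNReal
open scoped Matrix.Norms.L2Operator

noncomputable section

-- The Lebesgue–Stieltjes measure of a monotone function (zero if not monotone).
open scoped Classical in
noncomputable def monoMeasure (m : ℝ → ℝ) : Measure ℝ :=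
  if h : Monotone m then h.stieltjesFunction.measure else 0

/-- The function `f` clamped to the interval `[c,e]`. -/
def clampOn (f : ℝ → ℝ) (c e : ℝ) : ℝ → ℝ := fun x => f (max c (min x e))

/-- Cumulative total variation of the clamped function. -/
def varFun (f : ℝ → ℝ) (c e : ℝ) : ℝ → ℝ :=
  fun x => (eVariationOn (clampOn f c e) (Icc c x)).toReal

/-- Positive (Jordan) part. -/
def posPartFun (f : ℝ → ℝ) (c e : ℝ) : ℝ → ℝ :=
  fun x => (varFun f c e x + clampOn f c e x - f c) / 2

/-- Negative (Jordan) part. -/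
def negPartFun (f : ℝ → ℝ) (c e : ℝ) : ℝ → ℝ :=
  fun x => (varFun f c e x - clampOn f c e x + f c) / 2

/-- Lebesgue–Stieltjes integral of `φ` against (the measure associated with the
restriction to `[c,e)` of) the function `f`, over `[c,e)`. -/
def lsIntIcoR (f : ℝ → ℝ) (c e : ℝ) (φ : ℝ → ℝ) : ℝ :=
  (∫ x in Ico c e, φ x ∂(monoMeasure (posPartFun f c e))) -
  (∫ x in Ico c e, φ x ∂(monoMeasure (negPartFun f c e)))

/-- Same, over the open interval `(c,e)`. -/
def lsIntIooR (f : ℝ → ℝ) (c e : ℝ) (φ : ℝ → ℝ) : ℝ :=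
  (∫ x in Ioo c e, φ x ∂(monoMeasure (posPartFun f c e))) -
  (∫ x in Ioo c e, φ x ∂(monoMeasure (negPartFun f c e)))

/-- Complex Lebesgue–Stieltjes integral `∫_{[c,e)} φ df`. -/
def lsIntIcoC (f : ℝ → ℂ) (c e : ℝ) (φ : ℝ → ℂ) : ℂ :=
  (lsIntIcoR (fun x => (f x).re) c e (fun x => (φ x).re)
    - lsIntIcoR (fun x => (f x).im) c e (fun x => (φ x).im))
  + Complex.I * (lsIntIcoR (fun x => (f x).re) c e (fun x => (φ x).im)
    + lsIntIcoR (fun x => (f x).im) c e (fun x => (φ x).re))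

def lsIntIooC (f : ℝ → ℂ) (c e : ℝ) (φ : ℝ → ℂ) : ℂ :=
  (lsIntIooR (fun x => (f x).re) c e (fun x => (φ x).re)
    - lsIntIooR (fun x => (f x).im) c e (fun x => (φ x).im))
  + Complex.I * (lsIntIooR (fun x => (f x).re) c e (fun x => (φ x).im)
    + lsIntIooR (fun x => (f x).im) c e (fun x => (φ x).re))

/-- `∫_{[c,e)} dF(τ) G(τ)` for matrix-valued `F` (the integrator) and `G`. -/
def lsIntIcoMM {d : ℕ} (F : ℝ → Matrix (Fin d) (Fin d) ℂ) (c e : ℝ)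
    (G : ℝ → Matrix (Fin d) (Fin d) ℂ) : Matrix (Fin d) (Fin d) ℂ :=
  Matrix.of fun i k => ∑ j, lsIntIcoC (fun τ => F τ i j) c e (fun τ => G τ j k)

/-- `∫_{[c,e)} dF(τ) g(τ)` for matrix-valued `F` and vector-valued `g`. -/
def lsIntIcoMV {d : ℕ} (F : ℝ → Matrix (Fin d) (Fin d) ℂ) (c e : ℝ)
    (g : ℝ → Fin d → ℂ) : Fin d → ℂ :=
  fun i => ∑ j, lsIntIcoC (fun τ => F τ i j) c e (fun τ => g τ j)

def lsIntIooMV {d : ℕ} (F : ℝ → Matrix (Fin d) (Fin d) ℂ) (c e : ℝ)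
    (g : ℝ → Fin d → ℂ) : Fin d → ℂ :=
  fun i => ∑ j, lsIntIooC (fun τ => F τ i j) c e (fun τ => g τ j)

instance matrixMeasurableSpace {d : ℕ} : MeasurableSpace (Matrix (Fin d) (Fin d) ℂ) :=
  inferInstanceAs (MeasurableSpace (Fin d → Fin d → ℂ))

/-- A Stieltjes–Volterra kernel of type `B^∞` on `[a,b] × [a,b]`. -/
def IsSVKernel (d : ℕ) (a b : ℝ) (κ : ℝ → ℝ → Matrix (Fin d) (Fin d) ℂ) : Prop :=
  Measurable ((Icc a b ×ˢ Icc a b).restrict (fun p : ℝ × ℝ => κ p.1 p.2)) ∧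
  (∀ t ∈ Icc a b, ∀ τ ∈ Icc a b, t ≤ τ → κ t τ = 0) ∧
  (∀ t ∈ Icc a b, ∀ x ∈ Icc a b, ContinuousWithinAt (κ t) (Icc a b ∩ Iio x) x) ∧
  (∃ C : ℝ, ∀ t ∈ Icc a b, eVariationOn (κ t) (Icc a b) ≤ ENNReal.ofReal C) ∧
  (∀ ε > (0:ℝ), ∃ η > (0:ℝ), ∀ t ∈ Icc a b, ∀ τ ∈ Icc a b, 0 < t - τ → t - τ < η →
      eVariationOn (κ t) (Ico τ t) < ENNReal.ofReal ε)

/-- The norm `‖κ‖_{[a,b]} = sup_t ‖κ(t,·)‖_{BV([a,b])}` (base point `b`). -/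
def KNorm (d : ℕ) (a b : ℝ) (κ : ℝ → ℝ → Matrix (Fin d) (Fin d) ℂ) : ℝ≥0∞ :=
  ⨆ t ∈ Icc a b, eVariationOn (κ t) (Icc a b)

/-- `ρ` is a resolvent of the kernel `κ`. -/
def IsResolvent (d : ℕ) (a b : ℝ) (κ ρ : ℝ → ℝ → Matrix (Fin d) (Fin d) ℂ) : Prop :=
  IsSVKernel d a b ρ ∧
  ∀ t ∈ Icc a b, ∀ β ∈ Icc a b,
    ρ t β = -κ t β + lsIntIcoMM (κ t) β t (fun τ => ρ τ β)

/-- The value on the Borel set `B` of the (signed) Lebesgue–Stieltjes measure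
associated with the restriction of `f` to `[c,e)`. -/
def lsValR (f : ℝ → ℝ) (c e : ℝ) (B : Set ℝ) : ℝ :=
  (monoMeasure (posPartFun f c e) (B ∩ Ico c e)).toReal -
  (monoMeasure (negPartFun f c e) (B ∩ Ico c e)).toReal

/-- Complex-valued version of `lsValR`. -/
def lsValC (f : ℝ → ℂ) (c e : ℝ) (B : Set ℝ) : ℂ :=
  ⟨lsValR (fun x => (f x).re) c e B, lsValR (fun x => (f x).im) c e B⟩

/-- Matrix-valued version of `lsValR`: the matrix-valued Lebesgue–Stieltjes measure
associated with the restriction of `F` to `[c,e)`, evaluated on `B`. -/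
def lsValM {d : ℕ} (F : ℝ → Matrix (Fin d) (Fin d) ℂ) (c e : ℝ) (B : Set ℝ) :
    Matrix (Fin d) (Fin d) ℂ :=
  Matrix.of fun i j => lsValC (fun τ => F τ i j) c e B

section evar
variable {E : Type*} [SeminormedAddCommGroup E]

theorem eVariationOn_neg' (f : ℝ → E) (s : Set ℝ) :
    eVariationOn (fun x => -f x) s = eVariationOn f s := by
  simp only [eVariationOn, edist_neg_neg]

theorem eVariationOn_add_le' (f g : ℝ → E) (s : Set ℝ) :
    eVariationOn (fun x => f x + g x) s ≤ eVariationOn f s + eVariationOn g s := by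
  apply iSup_le
  rintro ⟨n, ⟨u, hu, us⟩⟩
  calc ∑ i ∈ Finset.range n, edist (f (u (i+1)) + g (u (i+1))) (f (u i) + g (u i))
      ≤ ∑ i ∈ Finset.range n,
        (edist (f (u (i+1))) (f (u i)) + edist (g (u (i+1))) (g (u i))) :=
        Finset.sum_le_sum fun i _ => edist_add_add_le _ _ _ _
    _ = (∑ i ∈ Finset.range n, edist (f (u (i+1))) (f (u i)))
        + ∑ i ∈ Finset.range n, edist (g (u (i+1))) (g (u i)) := Finset.sum_add_distrib
    _ ≤ _ := add_le_add (eVariationOn.sum_le hu us) (eVariationOn.sum_le hu us)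

theorem bvOn_add {f g : ℝ → E} {s : Set ℝ} (hf : BoundedVariationOn f s)
    (hg : BoundedVariationOn g s) : BoundedVariationOn (fun x => f x + g x) s :=
  ne_top_of_le_ne_top (by simp [ENNReal.add_ne_top, hf, hg, BoundedVariationOn] at *; tauto)
    (eVariationOn_add_le' f g s)

theorem bvOn_neg {f : ℝ → E} {s : Set ℝ} (hf : BoundedVariationOn f s) :
    BoundedVariationOn (fun x => -f x) s := by
  unfold BoundedVariationOn at *; rwa [eVariationOn_neg']

theorem bvOn_sub {f g : ℝ → E} {s : Set ℝ} (hf : BoundedVariationOn f s)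
    (hg : BoundedVariationOn g s) : BoundedVariationOn (fun x => f x - g x) s := by
  simpa [sub_eq_add_neg] using bvOn_add hf (bvOn_neg hg)

theorem bvOn_const {k : E} {s : Set ℝ} : BoundedVariationOn (fun _ => k) s := by
  unfold BoundedVariationOn
  rw [eVariationOn.constant_on]
  · simp
  · intro a ha b hb; simp only [mem_image] at ha hb
    obtain ⟨x,_,hx⟩ := ha; obtain ⟨y,_,hy⟩ := hb; rw [← hx, ← hy]

theorem bvOn_congr {f g : ℝ → E} {s : Set ℝ} (h : EqOn f g s)
    (hf : BoundedVariationOn f s) : BoundedVariationOn g s := by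
  unfold BoundedVariationOn at *
  rwa [eVariationOn.eq_of_eqOn h] at hf

theorem bvOn_sum {ι : Type*} (t : Finset ι) (f : ι → ℝ → E) {s : Set ℝ}
    (hf : ∀ i ∈ t, BoundedVariationOn (f i) s) :
    BoundedVariationOn (fun x => ∑ i ∈ t, f i x) s := by
  classical
  induction t using Finset.induction with
  | empty => simpa using bvOn_const (k := (0:E))
  | insert a t hnot ih =>
    have := bvOn_add (hf a (Finset.mem_insert_self a t))
      (ih (fun i hi => hf i (Finset.mem_insert_of_mem hi)))
    apply bvOn_congr (f := _) _ this
    intro x _; simp [Finset.sum_insert hnot]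

/-- step function `if t < x then v else 0` is BV on Icc. -/
theorem bvOn_step [NormedSpace ℝ E] (t : ℝ) (v : E) (c e : ℝ) :
    BoundedVariationOn (fun x => if t < x then v else 0) (Icc c e) := by
  have hχ : Monotone (fun x : ℝ => if t < x then (1:ℝ) else 0) := by
    intro a b hab
    by_cases ha : t < a
    · simp [ha, lt_of_lt_of_le ha hab]
    · by_cases hb : t < b <;> simp [ha, hb]
  have hlip : LipschitzWith ‖v‖₊ (fun r : ℝ => r • v) := by
    apply LipschitzWith.of_dist_le_mul
    intro a b
    simp only [dist_eq_norm, ← sub_smul, norm_smul]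
    rw [Real.norm_eq_abs, ← Real.dist_eq, dist_comm, Real.dist_eq]
    ring_nf
    exact le_rfl
  have hbv : BoundedVariationOn (fun x : ℝ => if t < x then (1:ℝ) else 0) (Icc c e) := by
    have := (hχ.monotoneOn univ).eVariationOn_le (mem_univ c) (mem_univ e)
    rw [univ_inter] at this
    exact ne_top_of_le_ne_top ENNReal.ofReal_ne_top this
  have := hlip.comp_boundedVariationOn hbv
  apply bvOn_congr (f := _) _ this
  intro x _
  simp only [Function.comp]
  split <;> simp

theorem bvOn_lipschitz {F : Type*} [SeminormedAddCommGroup F] {K : ℝ≥0} {φ : E → F}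
    (hφ : LipschitzWith K φ) {f : ℝ → E} {s : Set ℝ} (hf : BoundedVariationOn f s) :
    BoundedVariationOn (fun x => φ (f x)) s :=
  hφ.comp_boundedVariationOn hf

end evar


noncomputable section

theorem monoMeasure_Ioc {m : ℝ → ℝ} (hm : Monotone m) (x y : ℝ) :
    monoMeasure m (Ioc x y) = ENNReal.ofReal (Function.rightLim m y - Function.rightLim m x) := by
  rw [monoMeasure, dif_pos hm, StieltjesFunction.measure_Ioc,
    hm.stieltjesFunction_eq, hm.stieltjesFunction_eq]

theorem rightLim_add {m1 m2 : ℝ → ℝ} (h1 : Monotone m1) (h2 : Monotone m2) (x : ℝ) :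
    Function.rightLim (fun y => m1 y + m2 y) x
      = Function.rightLim m1 x + Function.rightLim m2 x := by
  have h12 : Monotone (fun y => m1 y + m2 y) := fun a b hab => add_le_add (h1 hab) (h2 hab)
  have := (h1.tendsto_rightLim x).add (h2.tendsto_rightLim x)
  exact tendsto_nhds_unique (h12.tendsto_rightLim x) this

theorem rightLim_const_mul {m : ℝ → ℝ} (hm : Monotone m) {a : ℝ} (ha : 0 ≤ a) (x : ℝ) :
    Function.rightLim (fun y => a * m y) x = a * Function.rightLim m x := by
  have ham : Monotone (fun y => a * m y) := fun u v huv =>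
    mul_le_mul_of_nonneg_left (hm huv) ha
  have := (hm.tendsto_rightLim x).const_mul a
  exact tendsto_nhds_unique (ham.tendsto_rightLim x) this

instance monoMeasure_locFinite (m : ℝ → ℝ) : IsLocallyFiniteMeasure (monoMeasure m) := by
  rw [monoMeasure]
  split
  · infer_instance
  · infer_instance

theorem monoMeasure_add {m1 m2 : ℝ → ℝ} (h1 : Monotone m1) (h2 : Monotone m2) :
    monoMeasure (fun y => m1 y + m2 y) = monoMeasure m1 + monoMeasure m2 := by
  have h12 : Monotone (fun y => m1 y + m2 y) := fun a b hab => add_le_add (h1 hab) (h2 hab)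
  refine Measure.ext_of_Ioc _ _ (fun a b hab => ?_)
  rw [Measure.add_apply, monoMeasure_Ioc h1, monoMeasure_Ioc h2, monoMeasure_Ioc h12,
    rightLim_add h1 h2, rightLim_add h1 h2]
  rw [← ENNReal.ofReal_add] <;>
    [skip; skip; skip]
  · ring_nf
  · simp [sub_nonneg]
    exact (h1.rightLim_le hab).trans (h1.le_rightLim le_rfl)
  · exact sub_nonneg.2 ((h2.rightLim_le hab).trans (h2.le_rightLim le_rfl))

theorem rightLim_mono {m : ℝ → ℝ} (hm : Monotone m) {a b : ℝ} (hab : a < b) :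
    Function.rightLim m a ≤ Function.rightLim m b :=
  (hm.rightLim_le hab).trans (hm.le_rightLim le_rfl)

theorem monoMeasure_smul {m : ℝ → ℝ} (hm : Monotone m) {a : ℝ} (ha : 0 ≤ a) :
    monoMeasure (fun y => a * m y) = ENNReal.ofReal a • monoMeasure m := by
  have ham : Monotone (fun y => a * m y) := fun u v huv =>
    mul_le_mul_of_nonneg_left (hm huv) ha
  refine Measure.ext_of_Ioc _ _ (fun u v huv => ?_)
  rw [Measure.smul_apply, smul_eq_mul, monoMeasure_Ioc hm, monoMeasure_Ioc ham,
    rightLim_const_mul hm ha, rightLim_const_mul hm ha, ← mul_sub,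
    ENNReal.ofReal_mul ha]

theorem monoMeasure_finite {m : ℝ → ℝ} (hm : Monotone m) {A : Set ℝ} {u v : ℝ}
    (hA : A ⊆ Ioc u v) : monoMeasure m A ≠ ⊤ := by
  refine ne_top_of_le_ne_top ?_ (measure_mono hA)
  rw [monoMeasure_Ioc hm]
  exact ENNReal.ofReal_ne_top

/-- Core uniqueness: the signed value only depends on the difference of the
monotone decomposition. -/
theorem lsVal_decomp_unique {p n p' n' : ℝ → ℝ} (hp : Monotone p) (hn : Monotone n)
    (hp' : Monotone p') (hn' : Monotone n') (hpn : ∀ x, p x + n' x = p' x + n x)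
    {A : Set ℝ} {u v : ℝ} (hA : A ⊆ Ioc u v) :
    (monoMeasure p A).toReal - (monoMeasure n A).toReal
      = (monoMeasure p' A).toReal - (monoMeasure n' A).toReal := by
  have hmeas : monoMeasure p + monoMeasure n' = monoMeasure p' + monoMeasure n := by
    rw [← monoMeasure_add hp hn', ← monoMeasure_add hp' hn]
    congr 1
    funext x
    exact hpn x
  have : monoMeasure p A + monoMeasure n' A = monoMeasure p' A + monoMeasure n A := by
    have h := congrArg (fun μ : Measure ℝ => μ A) hmeas
    simpa [Measure.add_apply] using h
  have fp := monoMeasure_finite hp hA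
  have fn := monoMeasure_finite hn hA
  have fp' := monoMeasure_finite hp' hA
  have fn' := monoMeasure_finite hn' hA
  have h2 : (monoMeasure p A).toReal + (monoMeasure n' A).toReal
      = (monoMeasure p' A).toReal + (monoMeasure n A).toReal := by
    rw [← ENNReal.toReal_add fp fn', ← ENNReal.toReal_add fp' fn]
    exact congrArg ENNReal.toReal this
  linarith

end

noncomputable section
-- t3: previous lemmas assumed present via t1/t2; here restate minimal needed

namespace LSAux

variable {f g : ℝ → ℝ} {c e : ℝ}

theorem clamp_mem (hc : c ≤ e) (x : ℝ) : max c (min x e) ∈ Icc c e :=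
  ⟨le_max_left _ _, max_le hc (min_le_right _ _)⟩

theorem clamp_monotone : Monotone (fun x : ℝ => max c (min x e)) :=
  fun _ _ h => max_le_max le_rfl (min_le_min_right _ h)

theorem clamp_eq_self {x : ℝ} (hx : x ∈ Icc c e) : max c (min x e) = x := by
  rw [min_eq_left hx.2, max_eq_right hx.1]

theorem clampOn_clamp (x : ℝ) (hc : c ≤ e) :
    clampOn f c e (max c (min x e)) = clampOn f c e x := by
  unfold clampOn
  rw [clamp_eq_self (clamp_mem hc x)]

theorem clampOn_eqOn (hc : c ≤ e) : EqOn (clampOn f c e) f (Icc c e) := by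
  intro x hx
  unfold clampOn
  rw [clamp_eq_self hx]

/-- variation of the clamped function up to `x` only depends on the clamp of `x`. -/
theorem evar_clamp (hc : c ≤ e) (x : ℝ) :
    eVariationOn (clampOn f c e) (Icc c x)
      = eVariationOn (clampOn f c e) (Icc c (max c (min x e))) := by
  rcases lt_or_ge x c with hx | hx
  · rw [Icc_eq_empty (by linarith), eVariationOn.subsingleton _ subsingleton_empty]
    have : max c (min x e) = c := by
      rw [min_eq_left (by linarith), max_eq_left (le_of_lt hx)]
    rw [this, eVariationOn.subsingleton _ (by rw [Set.Icc_self]; exact subsingleton_singleton)]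
  · rcases le_or_gt x e with hxe | hxe
    · rw [clamp_eq_self ⟨hx, hxe⟩]
    · have hcl : max c (min x e) = e := by rw [min_eq_right (le_of_lt hxe), max_eq_right hc]
      rw [hcl]
      have h0 : eVariationOn (clampOn f c e) (Icc e x) = 0 := by
        apply eVariationOn.constant_on
        rintro u ⟨y, hy, rfl⟩ w ⟨z, hz, rfl⟩
        unfold clampOn
        rw [min_eq_right hy.1, min_eq_right hz.1]
      have := eVariationOn.Icc_add_Icc (clampOn f c e) (s := univ) hc (le_of_lt hxe)
        (mem_univ e)
      simp only [univ_inter] at this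
      rw [← this, h0, add_zero]

theorem varFun_claim (hbv : BoundedVariationOn f (Icc c e)) (hc : c ≤ e)
    {x y : ℝ} (hxy : x ≤ y) :
    varFun f c e x + |clampOn f c e y - clampOn f c e x| ≤ varFun f c e y := by
  set g := clampOn f c e with hg
  set x' := max c (min x e) with hx'
  set y' := max c (min y e) with hy'
  have hx'y' : x' ≤ y' := clamp_monotone hxy
  have hcx' : c ≤ x' := le_max_left _ _
  have hfin : eVariationOn g (Icc c e) ≠ ⊤ := by
    rwa [eVariationOn.eq_of_eqOn (clampOn_eqOn hc)]
  have hx'e : x' ∈ Icc c e := clamp_mem hc x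
  have hy'e : y' ∈ Icc c e := clamp_mem hc y
  have hsplit := eVariationOn.Icc_add_Icc g (s := univ) hcx' hx'y' (mem_univ x')
  simp only [univ_inter] at hsplit
  have hfin2 : eVariationOn g (Icc c y') ≠ ⊤ :=
    ne_top_of_le_ne_top hfin (eVariationOn.mono g (Icc_subset_Icc le_rfl hy'e.2))
  have hfinA : eVariationOn g (Icc c x') ≠ ⊤ :=
    ne_top_of_le_ne_top hfin2 (eVariationOn.mono g (Icc_subset_Icc le_rfl hx'y'))
  have hfinB : eVariationOn g (Icc x' y') ≠ ⊤ := by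
    refine ne_top_of_le_ne_top hfin2 ?_
    rw [← hsplit]; exact le_add_self
  have hedist : edist (g x') (g y') ≤ eVariationOn g (Icc x' y') :=
    eVariationOn.edist_le g (left_mem_Icc.2 hx'y') (right_mem_Icc.2 hx'y')
  have hgx : g x' = g x := clampOn_clamp x hc
  have hgy : g y' = g y := clampOn_clamp y hc
  have hVx : varFun f c e x = (eVariationOn g (Icc c x')).toReal := by
    unfold varFun; rw [← hg, evar_clamp hc x]
  have hVy : varFun f c e y = (eVariationOn g (Icc c y')).toReal := by
    unfold varFun; rw [← hg, evar_clamp hc y]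
  rw [hVx, hVy, ← hsplit, ENNReal.toReal_add hfinA hfinB]
  have : |g y - g x| ≤ (eVariationOn g (Icc x' y')).toReal := by
    rw [← hgx, ← hgy, ← Real.dist_eq, dist_comm, dist_edist]
    exact ENNReal.toReal_mono hfinB hedist
  linarith

theorem posPartFun_mono (hbv : BoundedVariationOn f (Icc c e)) (hc : c ≤ e) :
    Monotone (posPartFun f c e) := by
  intro x y hxy
  have h := varFun_claim hbv hc hxy
  have h2 := neg_abs_le (clampOn f c e y - clampOn f c e x)
  unfold posPartFun
  linarith

theorem negPartFun_mono (hbv : BoundedVariationOn f (Icc c e)) (hc : c ≤ e) :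
    Monotone (negPartFun f c e) := by
  intro x y hxy
  have h := varFun_claim hbv hc hxy
  have h2 := le_abs_self (clampOn f c e y - clampOn f c e x)
  unfold negPartFun
  linarith

end LSAux
end

noncomputable section
namespace LSAux
variable {f g : ℝ → ℝ} {c e : ℝ} {B : Set ℝ}

theorem lipschitz_const_mul (a : ℝ) : LipschitzWith ‖a‖₊ (fun x : ℝ => a * x) := by
  apply LipschitzWith.of_dist_le_mul
  intro x y
  rw [Real.dist_eq, Real.dist_eq, ← mul_sub, abs_mul, coe_nnnorm, Real.norm_eq_abs]

theorem bvOn_const_mul (a : ℝ) {s : Set ℝ} (hf : BoundedVariationOn f s) :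
    BoundedVariationOn (fun x => a * f x) s :=
  (lipschitz_const_mul a).comp_boundedVariationOn hf

theorem Ico_subset_Ioc : Ico c e ⊆ Ioc (c - 1) e := fun x hx =>
  ⟨by linarith [hx.1], le_of_lt hx.2⟩

theorem lsValR_congr (h : EqOn f g (Icc c e)) (hc : c ≤ e) :
    lsValR f c e B = lsValR g c e B := by
  have h1 : clampOn f c e = clampOn g c e := by
    funext x
    exact h (clamp_mem hc x)
  have h2 : f c = g c := h ⟨le_rfl, hc⟩
  have hp : posPartFun f c e = posPartFun g c e := by
    funext x
    simp only [posPartFun, varFun, h1, h2]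
  have hn : negPartFun f c e = negPartFun g c e := by
    funext x
    simp only [negPartFun, varFun, h1, h2]
  unfold lsValR
  rw [hp, hn]

theorem lsValR_const (k : ℝ) : lsValR (fun _ => k) c e B = 0 := by
  have hV : varFun (fun _ => k) c e = fun _ => 0 := by
    funext x
    unfold varFun
    rw [eVariationOn.constant_on (by rintro u ⟨y, _, rfl⟩ w ⟨z, _, rfl⟩; rfl)]
    simp
  have : posPartFun (fun _ => k) c e = negPartFun (fun _ => k) c e := by
    funext x
    simp only [posPartFun, negPartFun, hV, clampOn]
    ring
  unfold lsValR
  rw [this, sub_self]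

theorem lsValR_add (hc : c ≤ e) (hf : BoundedVariationOn f (Icc c e))
    (hg : BoundedVariationOn g (Icc c e)) :
    lsValR (fun x => f x + g x) c e B = lsValR f c e B + lsValR g c e B := by
  have hfg : BoundedVariationOn (fun x => f x + g x) (Icc c e) := bvOn_add hf hg
  have hP := posPartFun_mono hfg hc
  have hN := negPartFun_mono hfg hc
  have hpf := posPartFun_mono hf hc
  have hnf := negPartFun_mono hf hc
  have hpg := posPartFun_mono hg hc
  have hng := negPartFun_mono hg hc
  have hA : B ∩ Ico c e ⊆ Ioc (c - 1) e := inter_subset_right.trans Ico_subset_Ioc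
  have key := lsVal_decomp_unique hP hN (hpf.add hpg) (hnf.add hng)
    (fun x => by
      simp only [posPartFun, negPartFun, clampOn, Pi.add_apply]
      ring) hA
  unfold lsValR
  rw [key, monoMeasure_add hpf hpg, monoMeasure_add hnf hng,
    Measure.add_apply, Measure.add_apply,
    ENNReal.toReal_add (monoMeasure_finite hpf hA) (monoMeasure_finite hpg hA),
    ENNReal.toReal_add (monoMeasure_finite hnf hA) (monoMeasure_finite hng hA)]
  ring

theorem lsValR_neg : lsValR (fun x => -f x) c e B = -lsValR f c e B := by
  have hV : varFun (fun x => -f x) c e = varFun f c e := by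
    funext x
    unfold varFun
    have : clampOn (fun x => -f x) c e = fun x => -(clampOn f c e x) := rfl
    rw [this, eVariationOn_neg']
  have hp : posPartFun (fun x => -f x) c e = negPartFun f c e := by
    funext x
    simp only [posPartFun, negPartFun, hV, clampOn]
    ring
  have hn : negPartFun (fun x => -f x) c e = posPartFun f c e := by
    funext x
    simp only [posPartFun, negPartFun, hV, clampOn]
    ring
  unfold lsValR
  rw [hp, hn]
  ring

theorem lsValR_smul_nonneg {a : ℝ} (ha : 0 ≤ a) (hc : c ≤ e)
    (hf : BoundedVariationOn f (Icc c e)) :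
    lsValR (fun x => a * f x) c e B = a * lsValR f c e B := by
  have haf : BoundedVariationOn (fun x => a * f x) (Icc c e) := bvOn_const_mul a hf
  have hP := posPartFun_mono haf hc
  have hN := negPartFun_mono haf hc
  have hpf := posPartFun_mono hf hc
  have hnf := negPartFun_mono hf hc
  have hpf' : Monotone (fun x => a * posPartFun f c e x) :=
    fun u v huv => mul_le_mul_of_nonneg_left (hpf huv) ha
  have hnf' : Monotone (fun x => a * negPartFun f c e x) :=
    fun u v huv => mul_le_mul_of_nonneg_left (hnf huv) ha
  have hA : B ∩ Ico c e ⊆ Ioc (c - 1) e := inter_subset_right.trans Ico_subset_Ioc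
  have key := lsVal_decomp_unique hP hN hpf' hnf'
    (fun x => by
      simp only [posPartFun, negPartFun, clampOn]
      ring) hA
  unfold lsValR
  rw [key, monoMeasure_smul hpf ha, monoMeasure_smul hnf ha,
    Measure.smul_apply, Measure.smul_apply, smul_eq_mul, smul_eq_mul,
    ENNReal.toReal_mul, ENNReal.toReal_mul, ENNReal.toReal_ofReal ha]
  ring

theorem lsValR_smul (a : ℝ) (hc : c ≤ e) (hf : BoundedVariationOn f (Icc c e)) :
    lsValR (fun x => a * f x) c e B = a * lsValR f c e B := by
  rcases le_or_gt 0 a with ha | ha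
  · exact lsValR_smul_nonneg ha hc hf
  · have h1 : (fun x => a * f x) = fun x => -((-a) * f x) := by
      funext x; ring
    rw [h1, lsValR_neg, lsValR_smul_nonneg (by linarith) hc hf]
    ring

end LSAux
end

noncomputable section
namespace LSAux
variable {c e : ℝ} {B : Set ℝ}

theorem lipschitz_re : LipschitzWith 1 Complex.re := by
  apply LipschitzWith.of_dist_le_mul
  intro x y
  rw [Real.dist_eq, Complex.dist_eq, ← Complex.sub_re]
  simpa using Complex.abs_re_le_norm (x - y)

theorem lipschitz_im : LipschitzWith 1 Complex.im := by
  apply LipschitzWith.of_dist_le_mul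
  intro x y
  rw [Real.dist_eq, Complex.dist_eq, ← Complex.sub_im]
  simpa using Complex.abs_im_le_norm (x - y)

theorem bv_re {f : ℝ → ℂ} {s : Set ℝ} (hf : BoundedVariationOn f s) :
    BoundedVariationOn (fun x => (f x).re) s :=
  lipschitz_re.comp_boundedVariationOn hf

theorem bv_im {f : ℝ → ℂ} {s : Set ℝ} (hf : BoundedVariationOn f s) :
    BoundedVariationOn (fun x => (f x).im) s :=
  lipschitz_im.comp_boundedVariationOn hf

theorem lipschitz_const_mulC (a : ℂ) : LipschitzWith ‖a‖₊ (fun x : ℂ => a * x) := by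
  apply LipschitzWith.of_dist_le_mul
  intro x y
  rw [dist_eq_norm, dist_eq_norm, ← mul_sub, norm_mul, coe_nnnorm]

theorem bvC_const_mul (a : ℂ) {f : ℝ → ℂ} {s : Set ℝ} (hf : BoundedVariationOn f s) :
    BoundedVariationOn (fun x => a * f x) s :=
  (lipschitz_const_mulC a).comp_boundedVariationOn hf

theorem lsValC_congr {f g : ℝ → ℂ} (h : EqOn f g (Icc c e)) (hc : c ≤ e) :
    lsValC f c e B = lsValC g c e B := by
  unfold lsValC
  have h1 : EqOn (fun x => (f x).re) (fun x => (g x).re) (Icc c e) :=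
    fun x hx => by simp only [h hx]
  have h2 : EqOn (fun x => (f x).im) (fun x => (g x).im) (Icc c e) :=
    fun x hx => by simp only [h hx]
  rw [lsValR_congr h1 hc, lsValR_congr h2 hc]

theorem lsValC_const (k : ℂ) : lsValC (fun _ => k) c e B = 0 := by
  unfold lsValC
  rw [lsValR_const, lsValR_const]
  rfl

theorem lsValC_add {f g : ℝ → ℂ} (hc : c ≤ e) (hf : BoundedVariationOn f (Icc c e))
    (hg : BoundedVariationOn g (Icc c e)) :
    lsValC (fun x => f x + g x) c e B = lsValC f c e B + lsValC g c e B := by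
  unfold lsValC
  have hre : (fun x => (f x + g x).re) = fun x => (f x).re + (g x).re := by
    funext x; simp
  have him : (fun x => (f x + g x).im) = fun x => (f x).im + (g x).im := by
    funext x; simp
  rw [Complex.ext_iff]
  constructor
  · simp only [Complex.add_re, hre]
    exact lsValR_add hc (bv_re hf) (bv_re hg)
  · simp only [Complex.add_im, him]
    exact lsValR_add hc (bv_im hf) (bv_im hg)

theorem lsValC_const_mul {f : ℝ → ℂ} (a : ℂ) (hc : c ≤ e)
    (hf : BoundedVariationOn f (Icc c e)) :
    lsValC (fun x => a * f x) c e B = a * lsValC f c e B := by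
  have hu := bv_re hf
  have hv := bv_im hf
  rw [Complex.ext_iff]
  unfold lsValC
  constructor
  · simp only [Complex.mul_re]
    rw [show (fun x => a.re * (f x).re - a.im * (f x).im)
        = (fun x => a.re * (f x).re + (-a.im) * (f x).im) from funext fun x => by ring]
    rw [lsValR_add hc (bvOn_const_mul _ hu) (bvOn_const_mul _ hv),
      lsValR_smul _ hc hu, lsValR_smul _ hc hv]
    ring
  · simp only [Complex.mul_im]
    rw [show (fun x => a.re * (f x).im + a.im * (f x).re)
        = (fun x => a.re * (f x).im + a.im * (f x).re) from rfl]
    rw [lsValR_add hc (bvOn_const_mul _ hv) (bvOn_const_mul _ hu),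
      lsValR_smul _ hc hv, lsValR_smul _ hc hu]

theorem lsValC_sum {ι : Type*} (t : Finset ι) (f : ι → ℝ → ℂ) (hc : c ≤ e)
    (hf : ∀ i ∈ t, BoundedVariationOn (f i) (Icc c e)) :
    lsValC (fun x => ∑ i ∈ t, f i x) c e B = ∑ i ∈ t, lsValC (f i) c e B := by
  classical
  induction t using Finset.induction with
  | empty => simpa using lsValC_const 0
  | insert a t hnot ih =>
    have hba : BoundedVariationOn (f a) (Icc c e) := hf a (Finset.mem_insert_self a t)
    have hbt : ∀ i ∈ t, BoundedVariationOn (f i) (Icc c e) :=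
      fun i hi => hf i (Finset.mem_insert_of_mem hi)
    have heq : (fun x => ∑ i ∈ insert a t, f i x)
        = fun x => f a x + ∑ i ∈ t, f i x := by
      funext x; rw [Finset.sum_insert hnot]
    rw [heq, lsValC_add hc hba (bvOn_sum t f hbt), ih hbt, Finset.sum_insert hnot]

end LSAux
end

open scoped Matrix.Norms.L2Operator

noncomputable section
namespace LSAux

theorem lipschitz_const_mul_ring {A : Type*} [NonUnitalSeminormedRing A] (a : A) :
    LipschitzWith ‖a‖₊ (fun x : A => a * x) := by
  apply LipschitzWith.of_dist_le_mul
  intro x y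
  rw [dist_eq_norm, dist_eq_norm, ← mul_sub, coe_nnnorm]
  exact norm_mul_le a (x - y)

end LSAux


open LSAux

/-- **Left continuity, local bounded variation, and the measure identity for the
fundamental solution.**

For fixed `t`, `α ↦ X(t,α)` is left-continuous and locally of bounded variation on `ℝ`;
and for `t ≥ s + τ_N` and each `j`, the matrix-valued Lebesgue–Stieltjes measures on
`[s, s+τ_j)` satisfy `d_α X(t,α) = ∑_{j'} D_{j'}(t) d_α X(t-τ_{j'}, α)`. -/
theorem fundamental_solution_leftCont_locBV_measure_identity
    (d N : ℕ) (hd : 0 < d)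
    (τ : Fin (N + 1) → ℝ) (hτpos : ∀ j, 0 < τ j) (hτmono : StrictMono τ)
    (D : Fin (N + 1) → ℝ → Matrix (Fin d) (Fin d) ℂ) (hD : ∀ j, Continuous (D j))
    (X : ℝ → ℝ → Matrix (Fin d) (Fin d) ℂ)
    (hX0 : ∀ t α : ℝ, t < α → X t α = 0)
    (hXrec : ∀ t α : ℝ, α ≤ t → X t α = 1 + ∑ j, D j t * X (t - τ j) α) :
    -- left continuity in the second variable
    (∀ t x : ℝ, ContinuousWithinAt (X t) (Iio x) x) ∧
    -- locally bounded variation in the second variable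
    (∀ t c e : ℝ, BoundedVariationOn (X t) (Icc c e)) ∧
    -- identity of measures on `[s, s+τ_j)` when `t ≥ s + τ_N`
    (∀ s t : ℝ, s + τ (Fin.last N) ≤ t → ∀ j : Fin (N + 1),
      ∀ B : Set ℝ, MeasurableSet B →
        lsValM (X t) s (s + τ j) B =
          ∑ j', D j' t * lsValM (fun α => X (t - τ j') α) s (s + τ j) B) := by
  have hτ0 : 0 < τ 0 := hτpos 0
  have hτle : ∀ j, τ 0 ≤ τ j := fun j => hτmono.monotone (Fin.zero_le j)
  -- global decomposition
  have hXdecomp : ∀ t α : ℝ, X t α = (1 + ∑ j, D j t * X (t - τ j) α)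
      - (if t < α then (1 : Matrix (Fin d) (Fin d) ℂ) else 0) := by
    intro t α
    rcases le_or_gt α t with h | h
    · rw [if_neg (not_lt.2 h), sub_zero]
      exact hXrec t α h
    · rw [hX0 t α h, if_pos h]
      have hz : ∀ j, X (t - τ j) α = 0 := fun j => hX0 _ _ (by linarith [hτpos j])
      simp [hz]
  -- choice of n
  have hex : ∀ t c : ℝ, ∃ n : ℕ, t < c + n * τ 0 := by
    intro t c
    obtain ⟨n, hn⟩ := exists_nat_gt ((t - c) / τ 0)
    refine ⟨n, ?_⟩
    rw [div_lt_iff₀ hτ0] at hn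
    linarith
  -- part 1
  have hbase : ∀ t x : ℝ, t < x → ContinuousWithinAt (X t) (Iio x) x := by
    intro t x htx
    have hmem : Ioi t ∈ nhdsWithin x (Iio x) :=
      mem_nhdsWithin_of_mem_nhds (Ioi_mem_nhds htx)
    have heq : X t =ᶠ[nhdsWithin x (Iio x)] (fun _ => 0) := by
      filter_upwards [hmem] with α hα using hX0 t α hα
    exact continuousWithinAt_const.congr_of_eventuallyEq heq (hX0 t x htx)
  have key1 : ∀ n : ℕ, ∀ t x : ℝ, t < x + n * τ 0 →
      ContinuousWithinAt (X t) (Iio x) x := by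
    intro n
    induction n with
    | zero =>
      intro t x ht
      exact hbase t x (by simpa using ht)
    | succ n ih =>
      intro t x ht
      rcases lt_or_ge t x with h | h
      · exact hbase t x h
      · have hG : ContinuousWithinAt
            (fun α => (1 : Matrix (Fin d) (Fin d) ℂ) + ∑ j, D j t * X (t - τ j) α)
            (Iio x) x := by
          apply ContinuousWithinAt.add continuousWithinAt_const
          exact tendsto_finset_sum _ fun j _ =>
            ContinuousWithinAt.mul continuousWithinAt_const
              (ih (t - τ j) x (by push_cast at ht ⊢; have := hτle j; linarith))
        have hH : ContinuousWithinAt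
            (fun α : ℝ => (if t < α then (1 : Matrix (Fin d) (Fin d) ℂ) else 0))
            (Iio x) x := by
          have heq : (fun α : ℝ => (if t < α then (1 : Matrix (Fin d) (Fin d) ℂ) else 0))
              =ᶠ[nhdsWithin x (Iio x)] (fun _ => 0) := by
            filter_upwards [self_mem_nhdsWithin] with α hα
            have : ¬ t < α := not_lt.2 (le_of_lt (lt_of_lt_of_le hα h))
            simp [this]
          exact continuousWithinAt_const.congr_of_eventuallyEq heq
            (by simp [not_lt.2 h])
        exact (hG.sub hH).congr (fun y _ => hXdecomp t y) (hXdecomp t x)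
  have part1 : ∀ t x : ℝ, ContinuousWithinAt (X t) (Iio x) x := by
    intro t x
    obtain ⟨n, hn⟩ := hex t x
    exact key1 n t x hn
  -- part 2
  have hbv0 : ∀ t c e : ℝ, t < c → BoundedVariationOn (X t) (Icc c e) := by
    intro t c e htc
    exact bvOn_congr (f := fun _ => (0 : Matrix (Fin d) (Fin d) ℂ))
      (fun x hx => (hX0 t x (lt_of_lt_of_le htc hx.1)).symm) bvOn_const
  have key2 : ∀ n : ℕ, ∀ t c e : ℝ, t < c + n * τ 0 →
      BoundedVariationOn (X t) (Icc c e) := by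
    intro n
    induction n with
    | zero =>
      intro t c e ht
      exact hbv0 t c e (by simpa using ht)
    | succ n ih =>
      intro t c e ht
      rcases lt_or_ge t c with h | h
      · exact hbv0 t c e h
      · have hG : BoundedVariationOn
            (fun α => (1 : Matrix (Fin d) (Fin d) ℂ) + ∑ j, D j t * X (t - τ j) α)
            (Icc c e) := by
          apply bvOn_add bvOn_const
          apply bvOn_sum
          intro j _
          exact (lipschitz_const_mul_ring (D j t)).comp_boundedVariationOn
            (ih (t - τ j) c e (by push_cast at ht ⊢; have := hτle j; linarith))
        have hH : BoundedVariationOn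
            (fun α : ℝ => (if t < α then (1 : Matrix (Fin d) (Fin d) ℂ) else 0))
            (Icc c e) := bvOn_step t 1 c e
        exact bvOn_congr (fun y _ => (hXdecomp t y).symm) (bvOn_sub hG hH)
  have part2 : ∀ t c e : ℝ, BoundedVariationOn (X t) (Icc c e) := by
    intro t c e
    obtain ⟨n, hn⟩ := hex t c
    exact key2 n t c e hn
  -- entrywise BV
  have key3 : ∀ n : ℕ, ∀ t c e : ℝ, t < c + n * τ 0 → ∀ i k : Fin d,
      BoundedVariationOn (fun α => X t α i k) (Icc c e) := by
    intro n
    induction n with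
    | zero =>
      intro t c e ht i k
      refine bvOn_congr (f := fun _ => (0 : ℂ)) (fun x hx => ?_) bvOn_const
      rw [hX0 t x (lt_of_lt_of_le (by simpa using ht) hx.1)]
      rfl
    | succ n ih =>
      intro t c e ht i k
      rcases lt_or_ge t c with h | h
      · refine bvOn_congr (f := fun _ => (0 : ℂ)) (fun x hx => ?_) bvOn_const
        rw [hX0 t x (lt_of_lt_of_le h hx.1)]
        rfl
      · have hf : BoundedVariationOn
            (fun α => ∑ j', ∑ m, D j' t i m * X (t - τ j') α m k) (Icc c e) := by
          apply bvOn_sum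
          intro j' _
          apply bvOn_sum
          intro m _
          exact bvC_const_mul _
            (ih (t - τ j') c e (by push_cast at ht ⊢; have := hτle j'; linarith) m k)
        have hst : BoundedVariationOn
            (fun α : ℝ => (if t < α then ((1 : Matrix (Fin d) (Fin d) ℂ) i k) else 0))
            (Icc c e) := bvOn_step t _ c e
        have heq : EqOn
            (fun α => ((1 : Matrix (Fin d) (Fin d) ℂ) i k
                + ∑ j', ∑ m, D j' t i m * X (t - τ j') α m k)
              - (if t < α then ((1 : Matrix (Fin d) (Fin d) ℂ) i k) else 0))
            (fun α => X t α i k) (Icc c e) := by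
          intro α _
          dsimp only
          rw [hXdecomp t α]
          simp only [Matrix.sub_apply, Matrix.add_apply, Matrix.sum_apply,
            Matrix.mul_apply, apply_ite (fun M : Matrix (Fin d) (Fin d) ℂ => M i k),
            Matrix.zero_apply]
        exact bvOn_congr heq (bvOn_sub (bvOn_add bvOn_const hf) hst)
  have entrybv : ∀ t c e : ℝ, ∀ i k : Fin d,
      BoundedVariationOn (fun α => X t α i k) (Icc c e) := by
    intro t c e i k
    obtain ⟨n, hn⟩ := hex t c
    exact key3 n t c e hn i k
  refine ⟨part1, part2, ?_⟩
  -- part 3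
  intro s t hst j B hB
  set c := s with hc
  set e := s + τ j with he
  have hce : c ≤ e := by rw [he]; linarith [hτpos j]
  have het : e ≤ t := by
    have := hτmono.monotone (Fin.le_last j)
    rw [he]; linarith
  refine Matrix.ext fun i k => ?_
  -- entries of both sides
  have hRHS : (∑ j', D j' t * lsValM (fun α => X (t - τ j') α) c e B) i k
      = ∑ j', ∑ m, D j' t i m * lsValC (fun α => X (t - τ j') α m k) c e B := by
    rw [Matrix.sum_apply]
    refine Finset.sum_congr rfl fun j' _ => ?_
    rw [Matrix.mul_apply]
    rfl
  have hLHS1 : lsValC (fun α => X t α i k) c e B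
      = lsValC (fun α => (1 : Matrix (Fin d) (Fin d) ℂ) i k
          + ∑ j', ∑ m, D j' t i m * X (t - τ j') α m k) c e B := by
    refine lsValC_congr (fun α hα => ?_) hce
    have hαt : α ≤ t := le_trans hα.2 het
    rw [hXrec t α hαt]
    simp only [Matrix.add_apply, Matrix.sum_apply, Matrix.mul_apply]
  have hbvsum : ∀ j' : Fin (N + 1), BoundedVariationOn
      (fun α => ∑ m, D j' t i m * X (t - τ j') α m k) (Icc c e) := by
    intro j'
    apply bvOn_sum
    intro m _
    exact bvC_const_mul _ (entrybv (t - τ j') c e m k)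
  have hLHS2 : lsValC (fun α => (1 : Matrix (Fin d) (Fin d) ℂ) i k
          + ∑ j', ∑ m, D j' t i m * X (t - τ j') α m k) c e B
      = ∑ j', ∑ m, D j' t i m * lsValC (fun α => X (t - τ j') α m k) c e B := by
    rw [lsValC_add hce bvOn_const (bvOn_sum _ _ (fun j' _ => hbvsum j')),
      lsValC_const, zero_add,
      lsValC_sum _ _ hce (fun j' _ => hbvsum j')]
    refine Finset.sum_congr rfl fun j' _ => ?_
    rw [lsValC_sum _ _ hce (fun m _ => bvC_const_mul _ (entrybv (t - τ j') c e m k))]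
    refine Finset.sum_congr rfl fun m _ => ?_
    rw [lsValC_const_mul _ hce (entrybv (t - τ j') c e m k)]
  show lsValC (fun α => X t α i k) c e B = _
  rw [hLHS1, hLHS2, hRHS]


end
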